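/- For the channel with rows f and uniform on GF(2)ⁿ, the mutual information with input probability p₀ on x=0 satisfies I(X;Y) = (p₀ - p₀²)/(2 log 2) · ∑_{m≠0} f̂(m)² + error, where the error is O(2^{2n} ∑_i |u_i|³) uniformly in p₀ ∈ [0,1], when f(i) = 2^{-n} + u_i with 2ⁿ|u_i| ≤ 1/2 for all i. In particular the capacity is approximately ∑_{m≠0} f̂(m)²/(8 log 2), attained at p₀ = 1/2. -/

import Mathlib

open Finset

/-- The `(-1)^{⟨i,j⟩}` sign, where `⟨i,j⟩` is the GF(2) inner product. -/
noncomputable def walshChar {n : ℕ} (i j : Fin n → ZMod 2) : ℝ :=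
  (-1 : ℝ) ^ ((∑ k, i k * j k : ZMod 2)).val

/-- Walsh transform of `f : GF(2)ⁿ → ℝ`. -/
noncomputable def walsh {n : ℕ} (f : (Fin n → ZMod 2) → ℝ) (i : Fin n → ZMod 2) : ℝ :=
  ∑ j, walshChar i j * f j

/-- Base-2 Shannon entropy of a distribution on GF(2)ⁿ (with `0 log 0 = 0`,
as guaranteed by `Real.logb`'s junk value `logb 2 0 = 0`). -/
noncomputable def shannonEnt {n : ℕ} (f : (Fin n → ZMod 2) → ℝ) : ℝ :=
  -∑ i, f i * Real.logb 2 (f i)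

lemma neg_one_pow_add (x y : ZMod 2) :
    ((-1 : ℝ)) ^ ((x + y).val) = (-1 : ℝ) ^ x.val * (-1 : ℝ) ^ y.val := by
  have h : ∀ z : ZMod 2, z = 0 ∨ z = 1 := by decide
  have h0 : ((0 : ZMod 2)).val = 0 := rfl
  have h1 : ((1 : ZMod 2)).val = 1 := rfl
  have h2 : ((1 + 1 : ZMod 2)).val = 0 := rfl
  rcases h x with hx | hx <;> rcases h y with hy | hy <;>
    simp [hx, hy, h0, h1, h2]

lemma walshChar_add_right {n : ℕ} (m j j' : Fin n → ZMod 2) :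
    walshChar m (j + j') = walshChar m j * walshChar m j' := by
  have hs : (∑ k, m k * (j + j') k) = (∑ k, m k * j k) + (∑ k, m k * j' k) := by
    rw [← Finset.sum_add_distrib]
    exact Finset.sum_congr rfl fun k _ => by rw [Pi.add_apply, mul_add]
  unfold walshChar
  rw [hs, neg_one_pow_add]

lemma walshChar_symm {n : ℕ} (i j : Fin n → ZMod 2) : walshChar i j = walshChar j i := by
  unfold walshChar; congr 2
  exact Finset.sum_congr rfl fun k _ => mul_comm _ _

lemma walshChar_zero_right {n : ℕ} (m : Fin n → ZMod 2) : walshChar m 0 = 1 := by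
  unfold walshChar; simp

lemma sum_walshChar_eq_zero {n : ℕ} (m : Fin n → ZMod 2) (hm : m ≠ 0) :
    ∑ j, walshChar m j = 0 := by
  obtain ⟨k, hk⟩ : ∃ k, m k ≠ 0 := by
    by_contra h; push_neg at h; exact hm (funext h)
  have hk1 : m k = 1 := by
    have h : ∀ z : ZMod 2, z ≠ 0 → z = 1 := by decide
    exact h _ hk
  set e : Fin n → ZMod 2 := Pi.single k 1 with he
  have hsum_e : (∑ l, m l * e l) = 1 := by
    rw [Finset.sum_eq_single k]
    · simp [he, hk1]
    · intro b _ hb; simp [he, Pi.single_eq_of_ne hb]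
    · simp
  have hχe : walshChar m e = -1 := by
    unfold walshChar; rw [hsum_e, show (1 : ZMod 2).val = 1 from rfl]; norm_num
  apply Finset.sum_ninvolution (fun j => j + e)
  · intro j
    rw [walshChar_add_right, hχe]; ring
  · intro j _ h
    have he0 : e = 0 := by
      have := congrArg (· - j) h
      simpa [add_comm] using this
    have := congrFun he0 k
    simp [he] at this
  · intro j; exact Finset.mem_univ _
  · intro j
    ext l
    simp [add_assoc, CharTwo.add_self_eq_zero]

lemma sum_walshChar_mul {n : ℕ} (j j' : Fin n → ZMod 2) :
    ∑ m, walshChar m j * walshChar m j' = if j = j' then (2:ℝ)^n else 0 := by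
  have h1 : ∀ m : Fin n → ZMod 2, walshChar m j * walshChar m j' = walshChar m (j + j') :=
    fun m => (walshChar_add_right m j j').symm
  simp_rw [h1]
  by_cases h : j = j'
  · subst h
    have : j + j = 0 := funext fun l => CharTwo.add_self_eq_zero (j l)
    simp [this, walshChar_zero_right, Finset.card_univ]
  · have hne : j + j' ≠ 0 := by
      intro hc
      apply h
      have key : ∀ a b : ZMod 2, a + b = 0 → a = b := by decide
      exact funext fun l => key _ _ (congrFun hc l)
    rw [if_neg h]
    calc ∑ m, walshChar m (j + j') = ∑ m, walshChar (j + j') m :=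
          Finset.sum_congr rfl fun m _ => walshChar_symm _ _
      _ = 0 := sum_walshChar_eq_zero _ hne

lemma parseval {n : ℕ} (u : (Fin n → ZMod 2) → ℝ) :
    ∑ m, (walsh u m) ^ 2 = (2:ℝ)^n * ∑ j, (u j) ^ 2 := by
  have expand : ∀ m : Fin n → ZMod 2, (walsh u m) ^ 2
      = ∑ j, ∑ j', (walshChar m j * walshChar m j') * (u j * u j') := by
    intro m
    rw [sq, walsh, Finset.sum_mul_sum]
    exact Finset.sum_congr rfl fun j _ => Finset.sum_congr rfl fun j' _ => by ring
  simp_rw [expand]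
  rw [Finset.sum_comm]
  have h2 : ∀ j : Fin n → ZMod 2,
      (∑ j' : Fin n → ZMod 2, ∑ m : Fin n → ZMod 2,
        (walshChar m j * walshChar m j') * (u j * u j'))
      = (2:ℝ)^n * u j ^ 2 := by
    intro j
    have h3 : ∀ j' : Fin n → ZMod 2,
        (∑ m : Fin n → ZMod 2, (walshChar m j * walshChar m j') * (u j * u j'))
        = (if j = j' then (2:ℝ)^n else 0) * (u j * u j') := by
      intro j'
      rw [← Finset.sum_mul, sum_walshChar_mul]
    simp_rw [h3]
    rw [Finset.sum_eq_single j]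
    · simp [sq]
    · intro b _ hb
      rw [if_neg fun hh => hb hh.symm, zero_mul]
    · intro hj; exact absurd (Finset.mem_univ j) hj
  calc ∑ j, ∑ m, ∑ j', (walshChar m j * walshChar m j') * (u j * u j')
      = ∑ j, ∑ j', ∑ m, (walshChar m j * walshChar m j') * (u j * u j') :=
        Finset.sum_congr rfl fun j _ => Finset.sum_comm
    _ = ∑ j, (2:ℝ)^n * u j ^ 2 := Finset.sum_congr rfl fun j _ => h2 j
    _ = (2:ℝ)^n * ∑ j, (u j) ^ 2 := by rw [Finset.mul_sum]

lemma parseval_ne_zero {n : ℕ} (f u : (Fin n → ZMod 2) → ℝ)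
    (hf : ∀ i, f i = ((2:ℝ)^n)⁻¹ + u i) (hu : ∑ i, u i = 0) :
    ∑ m ∈ univ.filter (· ≠ (0 : Fin n → ZMod 2)), walsh f m ^ 2
      = (2:ℝ)^n * ∑ j, (u j) ^ 2 := by
  have hfm : ∀ m : Fin n → ZMod 2, m ≠ 0 → walsh f m = walsh u m := by
    intro m hm
    unfold walsh
    simp_rw [hf]
    rw [show (∑ j, walshChar m j * (((2:ℝ)^n)⁻¹ + u j))
        = (∑ j, walshChar m j) * ((2:ℝ)^n)⁻¹ + ∑ j, walshChar m j * u j by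
      rw [Finset.sum_mul, ← Finset.sum_add_distrib]
      exact Finset.sum_congr rfl fun j _ => by ring]
    rw [sum_walshChar_eq_zero m hm]
    ring
  have hu0 : walsh u 0 = 0 := by
    unfold walsh
    calc ∑ j, walshChar 0 j * u j = ∑ j, u j :=
          Finset.sum_congr rfl fun j _ => by
            rw [walshChar_symm, walshChar_zero_right, one_mul]
      _ = 0 := hu
  calc ∑ m ∈ univ.filter (· ≠ (0 : Fin n → ZMod 2)), walsh f m ^ 2
      = ∑ m ∈ univ.filter (· ≠ (0 : Fin n → ZMod 2)), walsh u m ^ 2 :=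
        Finset.sum_congr rfl fun m hm => by
          rw [hfm m (by simpa using hm)]
    _ = ∑ m ∈ univ.erase 0, walsh u m ^ 2 := by rw [Finset.filter_ne']
    _ = ∑ m, walsh u m ^ 2 - walsh u 0 ^ 2 :=
        Finset.sum_erase_eq_sub (Finset.mem_univ 0)
    _ = (2:ℝ)^n * ∑ j, (u j) ^ 2 := by rw [hu0, parseval]; ring

lemma log_taylor2 {t : ℝ} (ht : |t| ≤ 1/2) :
    |Real.log (1+t) - (t - t^2/2)| ≤ 2*|t|^3 := by
  have h : |(-t)| < 1 := by rw [abs_neg]; linarith [abs_nonneg t]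
  have key := Real.abs_log_sub_add_sum_range_le h 2
  rw [Finset.sum_range_succ, Finset.sum_range_succ, Finset.sum_range_zero] at key
  norm_num at key
  have h3 : |t|^3 / (1 - |t|) ≤ 2*|t|^3 := by
    rw [div_le_iff₀ (by linarith [abs_nonneg t])]
    nlinarith [pow_nonneg (abs_nonneg t) 3, abs_nonneg t]
  have h4 : Real.log (1+t) - (t - t^2/2) = -t + t^2/2 + Real.log (1+t) := by ring
  rw [h4]
  exact le_trans key h3

lemma psi_taylor {t : ℝ} (ht : |t| ≤ 1/2) :
    |(1+t)*Real.log (1+t) - (t + t^2/2)| ≤ 4*|t|^3 := by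
  set r := Real.log (1+t) - (t - t^2/2) with hr
  have hrb : |r| ≤ 2*|t|^3 := log_taylor2 ht
  have hlog : Real.log (1+t) = (t - t^2/2) + r := by rw [hr]; ring
  have heq : (1+t)*Real.log (1+t) - (t + t^2/2) = -t^3/2 + (1+t)*r := by
    rw [hlog]; ring
  rw [heq]
  have h1t : |1+t| ≤ 3/2 := by
    have := abs_le.mp ht; rw [abs_le]; constructor <;> linarith
  have e1 : |-t^3/2| = |t|^3/2 := by
    rw [abs_div, abs_neg, abs_pow]; norm_num
  have e2 : |(1+t)*r| ≤ (3/2)*(2*|t|^3) :=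
    abs_mul (1+t) r ▸ mul_le_mul h1t hrb (abs_nonneg r) (by norm_num)
  calc |-t^3/2 + (1+t)*r| ≤ |-t^3/2| + |(1+t)*r| := abs_add_le _ _
    _ ≤ |t|^3/2 + (3/2)*(2*|t|^3) := by rw [e1]; linarith
    _ ≤ 4*|t|^3 := by nlinarith [pow_nonneg (abs_nonneg t) 3]

lemma key_bound {t p : ℝ} (ht : |t| ≤ 1/2) (hp0 : 0 ≤ p) (hp1 : p ≤ 1) :
    |p * ((1+t)*Real.log (1+t)) - (1+p*t)*Real.log (1+p*t) - (p - p^2)*t^2/2|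
      ≤ 8*|t|^3 := by
  have habs : |p*t| ≤ |t| := by
    rw [abs_mul, abs_of_nonneg hp0]
    nlinarith [abs_nonneg t]
  have hpt : |p*t| ≤ 1/2 := le_trans habs ht
  have h1 := psi_taylor ht
  have h2 := psi_taylor hpt
  have hptc : |p*t|^3 ≤ |t|^3 := pow_le_pow_left₀ (abs_nonneg _) habs 3
  have heq : p * ((1+t)*Real.log (1+t)) - (1+p*t)*Real.log (1+p*t) - (p - p^2)*t^2/2
      = p * ((1+t)*Real.log (1+t) - (t + t^2/2))
        - ((1+p*t)*Real.log (1+p*t) - (p*t + (p*t)^2/2)) := by ring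
  rw [heq]
  have e3 : |p * ((1+t)*Real.log (1+t) - (t + t^2/2))| ≤ 1*(4*|t|^3) := by
    rw [abs_mul, abs_of_nonneg hp0]
    exact mul_le_mul hp1 h1 (abs_nonneg _) zero_le_one
  calc |p * ((1+t)*Real.log (1+t) - (t + t^2/2))
        - ((1+p*t)*Real.log (1+p*t) - (p*t + (p*t)^2/2))|
      ≤ |p * ((1+t)*Real.log (1+t) - (t + t^2/2))|
        + |(1+p*t)*Real.log (1+p*t) - (p*t + (p*t)^2/2)| := abs_sub _ _
    _ ≤ 1*(4*|t|^3) + 4*|p*t|^3 := add_le_add e3 h2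
    _ ≤ 8*|t|^3 := by nlinarith

lemma point_formula (n : ℕ) (x : ℝ) (hx : (2:ℝ)^n * |x| ≤ 1/2) :
    (((2:ℝ)^n)⁻¹ + x) * Real.logb 2 (((2:ℝ)^n)⁻¹ + x)
      = ((1 + (2:ℝ)^n*x) * Real.log (1 + (2:ℝ)^n*x)) / ((2:ℝ)^n * Real.log 2)
        - n * (1 + (2:ℝ)^n*x) / (2:ℝ)^n := by
  set N := (2:ℝ)^n with hNd
  have hN : (0:ℝ) < N := pow_pos two_pos n
  have hL : (0:ℝ) < Real.log 2 := Real.log_pos one_lt_two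
  have habs : |N * x| ≤ 1/2 := by
    rw [abs_mul, abs_of_pos hN]; exact hx
  have h1 : (0:ℝ) < 1 + N*x := by
    have := (abs_le.mp habs).1; linarith
  have hfx : N⁻¹ + x = (1 + N*x)/N := by field_simp
  rw [hfx, Real.logb, Real.log_div (by linarith) (ne_of_gt hN)]
  have hlogN : Real.log N = n * Real.log 2 := by
    rw [hNd, Real.log_pow]
  rw [hlogN]
  field_simp

lemma ent_eq (n : ℕ) (v : (Fin n → ZMod 2) → ℝ) (hv : ∀ i, (2:ℝ)^n * |v i| ≤ 1/2)
    (hv0 : ∑ i, v i = 0) :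
    shannonEnt (fun i => ((2:ℝ)^n)⁻¹ + v i)
      = n - (∑ i, (1 + (2:ℝ)^n * v i) * Real.log (1 + (2:ℝ)^n * v i))
          / ((2:ℝ)^n * Real.log 2) := by
  set N := (2:ℝ)^n with hNd
  have hN : (0:ℝ) < N := pow_pos two_pos n
  unfold shannonEnt
  have hpt : ∀ i, (N⁻¹ + v i) * Real.logb 2 (N⁻¹ + v i)
      = ((1 + N*(v i)) * Real.log (1 + N*(v i))) / (N * Real.log 2)
        - n * (1 + N*(v i)) / N := fun i => point_formula n (v i) (hv i)
  have hcard : (Fintype.card (Fin n → ZMod 2) : ℝ) = N := by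
    rw [hNd]
    simp [Fintype.card_fun]
  calc -∑ i, (N⁻¹ + v i) * Real.logb 2 (N⁻¹ + v i)
      = -∑ i, (((1 + N*(v i)) * Real.log (1 + N*(v i))) / (N * Real.log 2)
          - n * (1 + N*(v i)) / N) := by
        rw [Finset.sum_congr rfl fun i _ => hpt i]
    _ = -((∑ i, (1 + N*(v i)) * Real.log (1 + N*(v i))) / (N * Real.log 2)
          - (n/N) * ∑ i, (1 + N*(v i))) := by
        rw [Finset.sum_sub_distrib, Finset.sum_div, Finset.mul_sum]
        congr 1
        congr 1
        exact Finset.sum_congr rfl fun i _ => by ring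
    _ = n - (∑ i, (1 + N*(v i)) * Real.log (1 + N*(v i))) / (N * Real.log 2) := by
        have hsum : ∑ i : Fin n → ZMod 2, (1 + N*(v i)) = N := by
          rw [Finset.sum_add_distrib]
          rw [show (∑ i : Fin n → ZMod 2, N * v i) = N * ∑ i, v i from (Finset.mul_sum _ _ _).symm]
          rw [hv0, mul_zero, add_zero, Finset.sum_const, Finset.card_univ, nsmul_eq_mul, mul_one]
          exact hcard
        rw [hsum]
        field_simp
        ring

/-- Mutual information of the channel with rows `f` and uniform on GF(2)ⁿ:
`I(X;Y) = H(Y) - H(Y|X)` with `H(Y|X) = p₀ H(f) + (1 - p₀) n` satisfies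
`I(X;Y) = (p₀ - p₀²)/(2 log 2) · ∑_{m ≠ 0} f̂(m)² + O(2^{2n} ∑ |uᵢ|³)`,
uniformly in `p₀ ∈ [0,1]`, when `f(i) = 2⁻ⁿ + uᵢ` with `2ⁿ|uᵢ| ≤ 1/2`.
(The capacity is thus approximately `∑_{m≠0} f̂(m)²/(8 log 2)`, at `p₀ = 1/2`.) -/
theorem channel_info_walsh (n : ℕ) :
    ∃ c : ℝ, ∀ (f u : (Fin n → ZMod 2) → ℝ) (p₀ : ℝ),
      (∀ i, f i = ((2 : ℝ) ^ n)⁻¹ + u i) →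
      (∑ i, u i) = 0 →
      (∀ i, (2 : ℝ) ^ n * |u i| ≤ 1 / 2) →
      p₀ ∈ Set.Icc (0:ℝ) 1 →
      |(shannonEnt (fun i => p₀ * f i + (1 - p₀) * ((2 : ℝ) ^ n)⁻¹) -
            (p₀ * shannonEnt f + (1 - p₀) * n)) -
          (p₀ - p₀ ^ 2) / (2 * Real.log 2) *
            ∑ m ∈ univ.filter (· ≠ (0 : Fin n → ZMod 2)), walsh f m ^ 2| ≤
        c * (2 : ℝ) ^ (2 * n) * ∑ i, |u i| ^ 3 := by
  refine ⟨8 / Real.log 2, fun f u p₀ hf hu hsmall hp => ?_⟩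
  obtain ⟨hp0, hp1⟩ := hp
  have hN : (0:ℝ) < (2:ℝ)^n := pow_pos two_pos n
  have hL : (0:ℝ) < Real.log 2 := Real.log_pos one_lt_two
  -- rewrite the two entropies
  have hfe : f = fun i => ((2:ℝ)^n)⁻¹ + u i := funext hf
  have hge : (fun i => p₀ * f i + (1 - p₀) * ((2:ℝ)^n)⁻¹)
      = fun i => ((2:ℝ)^n)⁻¹ + p₀ * u i := funext fun i => by rw [hf i]; ring
  have hvsmall : ∀ i, (2:ℝ)^n * |p₀ * u i| ≤ 1/2 := by
    intro i
    rw [abs_mul, abs_of_nonneg hp0]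
    calc (2:ℝ)^n * (p₀ * |u i|) = p₀ * ((2:ℝ)^n * |u i|) := by ring
      _ ≤ 1 * (1/2) := mul_le_mul hp1 (hsmall i) (by positivity) zero_le_one
      _ = 1/2 := by norm_num
  have hvsum : ∑ i, p₀ * u i = 0 := by
    rw [← Finset.mul_sum, hu, mul_zero]
  have hEf : shannonEnt f
      = n - (∑ i, (1 + (2:ℝ)^n * u i) * Real.log (1 + (2:ℝ)^n * u i))
          / ((2:ℝ)^n * Real.log 2) := by
    rw [hfe]; exact ent_eq n u hsmall hu
  have hEg : shannonEnt (fun i => p₀ * f i + (1 - p₀) * ((2:ℝ)^n)⁻¹)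
      = n - (∑ i, (1 + p₀ * ((2:ℝ)^n * u i)) * Real.log (1 + p₀ * ((2:ℝ)^n * u i)))
          / ((2:ℝ)^n * Real.log 2) := by
    rw [hge, ent_eq n (fun i => p₀ * u i) hvsmall hvsum]
    congr 2
    exact Finset.sum_congr rfl fun i _ => by rw [show (2:ℝ)^n * (p₀ * u i) = p₀ * ((2:ℝ)^n * u i) from by ring]
  have hS := parseval_ne_zero f u hf hu
  rw [hEf, hEg, hS]
  set N := (2:ℝ)^n with hNd
  set L := Real.log 2 with hLd
  set A := ∑ i, (1 + N * u i) * Real.log (1 + N * u i) with hA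
  set B := ∑ i, (1 + p₀ * (N * u i)) * Real.log (1 + p₀ * (N * u i)) with hB
  -- main algebraic identity
  have hsumD : ∑ i, (p₀ * ((1 + N * u i) * Real.log (1 + N * u i))
        - (1 + p₀ * (N * u i)) * Real.log (1 + p₀ * (N * u i))
        - (p₀ - p₀^2) * (N * u i)^2 / 2)
      = p₀ * A - B - (p₀ - p₀^2) * N^2 * (∑ i, u i^2) / 2 := by
    rw [Finset.sum_sub_distrib, Finset.sum_sub_distrib, hA, hB, ← Finset.mul_sum]
    congr 1
    rw [show ∑ i, (p₀ - p₀^2) * (N * u i)^2 / 2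
        = ∑ i, ((p₀ - p₀^2) * N^2 / 2) * (u i)^2 from
        Finset.sum_congr rfl fun i _ => by ring]
    rw [← Finset.mul_sum]
    ring
  have hmain : (↑n - B / (N * L)) - (p₀ * (↑n - A / (N * L)) + (1 - p₀) * ↑n)
        - (p₀ - p₀^2) / (2 * L) * (N * ∑ i, u i ^ 2)
      = (∑ i, (p₀ * ((1 + N * u i) * Real.log (1 + N * u i))
          - (1 + p₀ * (N * u i)) * Real.log (1 + p₀ * (N * u i))
          - (p₀ - p₀^2) * (N * u i)^2 / 2)) / (N * L) := by
    rw [hsumD]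
    field_simp
    ring
  rw [hmain]
  -- bound the sum termwise
  have hDb : ∀ i, |p₀ * ((1 + N * u i) * Real.log (1 + N * u i))
        - (1 + p₀ * (N * u i)) * Real.log (1 + p₀ * (N * u i))
        - (p₀ - p₀^2) * (N * u i)^2 / 2| ≤ 8 * (N^3 * |u i|^3) := by
    intro i
    have ht : |N * u i| ≤ 1/2 := by
      rw [abs_mul, abs_of_pos hN]; exact hsmall i
    have := key_bound ht hp0 hp1
    calc |p₀ * ((1 + N * u i) * Real.log (1 + N * u i))
          - (1 + p₀ * (N * u i)) * Real.log (1 + p₀ * (N * u i))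
          - (p₀ - p₀^2) * (N * u i)^2 / 2| ≤ 8 * |N * u i|^3 := this
      _ = 8 * (N^3 * |u i|^3) := by
          rw [abs_mul, abs_of_pos hN, mul_pow]
  have hsumb : |∑ i, (p₀ * ((1 + N * u i) * Real.log (1 + N * u i))
        - (1 + p₀ * (N * u i)) * Real.log (1 + p₀ * (N * u i))
        - (p₀ - p₀^2) * (N * u i)^2 / 2)| ≤ 8 * N^3 * ∑ i, |u i|^3 := by
    calc |∑ i, (p₀ * ((1 + N * u i) * Real.log (1 + N * u i))
          - (1 + p₀ * (N * u i)) * Real.log (1 + p₀ * (N * u i))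
          - (p₀ - p₀^2) * (N * u i)^2 / 2)|
        ≤ ∑ i, |p₀ * ((1 + N * u i) * Real.log (1 + N * u i))
          - (1 + p₀ * (N * u i)) * Real.log (1 + p₀ * (N * u i))
          - (p₀ - p₀^2) * (N * u i)^2 / 2| := Finset.abs_sum_le_sum_abs _ _
      _ ≤ ∑ i, 8 * (N^3 * |u i|^3) := Finset.sum_le_sum fun i _ => hDb i
      _ = 8 * N^3 * ∑ i, |u i|^3 := by
          rw [Finset.mul_sum]
          exact Finset.sum_congr rfl fun i _ => by ring
  rw [abs_div, abs_of_pos (mul_pos hN hL)]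
  rw [div_le_iff₀ (mul_pos hN hL)]
  have hpow : (2:ℝ)^(2*n) = N^2 := by rw [hNd, two_mul, pow_add]; ring
  have hgoal : 8 / L * (2:ℝ)^(2*n) * (∑ i, |u i|^3) * (N * L) = 8 * N^3 * ∑ i, |u i|^3 := by
    rw [hpow]
    field_simp
  rw [hgoal]
  exact hsumb
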